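/- The trigonometric Calogero–Moser r-matrix satisfies the generalized classical Yang–Baxter equation: for all λ_1, λ_2, λ_3 ∈ ℂ with λ_a−λ_b ∉ iπℤ (a≠b) and all x ∈ ℂ^N with x_{ij} ∉ iπℤ (i≠j), setting r_{ab} = r(λ_a,λ_b,x) placed in factors (a,b) of (ℂ^N)^{⊗3}, one has [r_{12},r_{13}] + [r_{12},r_{23}] + [r_{13},r_{23}] − Σ_{ν=1}^N (e_{νν}⊗Id⊗Id)·∂_{x_ν} r_{23} + Σ_{ν=1}^N (Id⊗e_{νν}⊗Id)·∂_{x_ν} r_{13} − Σ_{ν=1}^N (Id⊗Id⊗e_{νν})·∂_{x_ν} r_{12} = 0. -/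

import Mathlib

/- STATEMENT 1: The trigonometric Calogero–Moser r-matrix satisfies the
   generalized classical Yang–Baxter equation
   [r12,r13]+[r12,r23]+[r13,r23] − Σ_ν e_{νν}^{(1)} ∂_{x_ν} r23
   + Σ_ν e_{νν}^{(2)} ∂_{x_ν} r13 − Σ_ν e_{νν}^{(3)} ∂_{x_ν} r12 = 0. -/

noncomputable section
open Matrix Complex
open scoped Kronecker BigOperators

def coth (z : ℂ) : ℂ := Complex.cosh z / Complex.sinh z

def inPiZ (z : ℂ) : Prop := ∃ n : ℤ, z = (n : ℂ) * (Real.pi : ℂ) * Complex.I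

variable (N : ℕ)

def E (i j : Fin N) : Matrix (Fin N) (Fin N) ℂ := Matrix.single i j 1

def flipP : Matrix (Fin N × Fin N) (Fin N × Fin N) ℂ :=
  ∑ i : Fin N, ∑ j : Fin N, E N i j ⊗ₖ E N j i

/-- trigonometric Calogero–Moser r-matrix -/
def rCM (lam mu : ℂ) (x : Fin N → ℂ) : Matrix (Fin N × Fin N) (Fin N × Fin N) ℂ :=
  coth (lam - mu) • flipP N -
    ∑ i : Fin N, ∑ j : Fin N,
      if i ≠ j then coth (x i - x j) • (E N i j ⊗ₖ E N j i) else 0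

/-- a matrix on ℂ^N ⊗ ℂ^N placed in factors 1,2 of (ℂ^N)^{⊗3} -/
def pl12 (A : Matrix (Fin N × Fin N) (Fin N × Fin N) ℂ) :
    Matrix (Fin N × Fin N × Fin N) (Fin N × Fin N × Fin N) ℂ :=
  fun p q => A (p.1, p.2.1) (q.1, q.2.1) * (if p.2.2 = q.2.2 then 1 else 0)

/-- a matrix on ℂ^N ⊗ ℂ^N placed in factors 1,3 of (ℂ^N)^{⊗3} -/
def pl13 (A : Matrix (Fin N × Fin N) (Fin N × Fin N) ℂ) :
    Matrix (Fin N × Fin N × Fin N) (Fin N × Fin N × Fin N) ℂ :=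
  fun p q => A (p.1, p.2.2) (q.1, q.2.2) * (if p.2.1 = q.2.1 then 1 else 0)

/-- a matrix on ℂ^N ⊗ ℂ^N placed in factors 2,3 of (ℂ^N)^{⊗3} -/
def pl23 (A : Matrix (Fin N × Fin N) (Fin N × Fin N) ℂ) :
    Matrix (Fin N × Fin N × Fin N) (Fin N × Fin N × Fin N) ℂ :=
  fun p q => A (p.2.1, p.2.2) (q.2.1, q.2.2) * (if p.1 = q.1 then 1 else 0)

/-- an N×N matrix placed in factor a ∈ {1,2,3} of (ℂ^N)^{⊗3} -/
def pl1 (h : Matrix (Fin N) (Fin N) ℂ) :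
    Matrix (Fin N × Fin N × Fin N) (Fin N × Fin N × Fin N) ℂ :=
  fun p q => h p.1 q.1 * (if p.2.1 = q.2.1 then 1 else 0) * (if p.2.2 = q.2.2 then 1 else 0)

def pl2 (h : Matrix (Fin N) (Fin N) ℂ) :
    Matrix (Fin N × Fin N × Fin N) (Fin N × Fin N × Fin N) ℂ :=
  fun p q => h p.2.1 q.2.1 * (if p.1 = q.1 then 1 else 0) * (if p.2.2 = q.2.2 then 1 else 0)

def pl3 (h : Matrix (Fin N) (Fin N) ℂ) :
    Matrix (Fin N × Fin N × Fin N) (Fin N × Fin N × Fin N) ℂ :=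
  fun p q => h p.2.2 q.2.2 * (if p.1 = q.1 then 1 else 0) * (if p.2.1 = q.2.1 then 1 else 0)

/-- entrywise partial derivative ∂_{x_ν} of a matrix-valued function of x ∈ ℂ^N -/
def pderivMat {α : Type} (ν : Fin N)
    (f : (Fin N → ℂ) → Matrix α α ℂ) (x : Fin N → ℂ) : Matrix α α ℂ :=
  fun p q => deriv (fun t : ℂ => f (Function.update x ν t) p q) (x ν)

/-- matrix commutator -/
def mcomm {α : Type} [Fintype α] [DecidableEq α] (A B : Matrix α α ℂ) : Matrix α α ℂ :=
  A * B - B * A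


-- ===== auxiliary lemmas =====

lemma sinh_ne_zero_of_not_inPiZ {z : ℂ} (h : ¬ inPiZ z) : Complex.sinh z ≠ 0 := by
  intro h0
  apply h
  have hs : Complex.sin (z * Complex.I) = 0 := by
    rw [Complex.sin_mul_I, h0, zero_mul]
  obtain ⟨k, hk⟩ := Complex.sin_eq_zero_iff.1 hs
  refine ⟨-k, ?_⟩
  push_cast
  linear_combination (-Complex.I) * hk + z * Complex.I_sq

lemma coth_neg (z : ℂ) : coth (-z) = - coth z := by
  simp [coth, Complex.sinh_neg, Complex.cosh_neg, neg_div, div_neg]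

lemma coth_hasDerivAt {z : ℂ} (h : Complex.sinh z ≠ 0) :
    HasDerivAt coth (1 - coth z ^ 2) z := by
  have h1 := (Complex.hasDerivAt_cosh z).div (Complex.hasDerivAt_sinh z) h
  refine h1.congr_deriv ?_
  simp only [coth]
  field_simp

lemma coth_addition {s t : ℂ} (hs : Complex.sinh s ≠ 0) (ht : Complex.sinh t ≠ 0)
    (hst : Complex.sinh (s + t) ≠ 0) :
    coth s * coth t + 1 = coth (s + t) * (coth s + coth t) := by
  have h3 : Complex.sinh s * Complex.cosh t + Complex.cosh s * Complex.sinh t ≠ 0 := by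
    rw [← Complex.sinh_add]; exact hst
  rw [coth, coth, coth, Complex.sinh_add, Complex.cosh_add]
  field_simp
  ring

def cf (x : Fin N → ℂ) (l m : ℂ) (i j : Fin N) : ℂ :=
  coth (l - m) - if i ≠ j then coth (x i - x j) else 0

def dc (x : Fin N → ℂ) (ν a b : Fin N) : ℂ :=
  if a ≠ b then
    -(((if ν = a then (1:ℂ) else 0) - if ν = b then 1 else 0) * (1 - coth (x a - x b) ^ 2))
  else 0

lemma kron_apply (i j a b d e : Fin N) :
    (E N i j ⊗ₖ E N j i) (a, b) (d, e) = if i = a ∧ j = b ∧ d = b ∧ e = a then 1 else 0 := by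
  simp only [E, Matrix.kroneckerMap_apply, Matrix.single, Matrix.of_apply]
  split_ifs <;> simp_all

lemma flipP_apply (a b d e : Fin N) :
    flipP N (a, b) (d, e) = if d = b ∧ e = a then 1 else 0 := by
  simp only [flipP, Matrix.sum_apply, kron_apply]
  by_cases h : d = b ∧ e = a <;> simp [h, ite_and, Finset.sum_ite_eq', Finset.sum_ite_eq]

lemma rCM_apply (l m : ℂ) (x : Fin N → ℂ) (a b d e : Fin N) :
    rCM N l m x (a, b) (d, e) = if d = b ∧ e = a then cf N x l m a b else 0 := by
  have hterm : ∀ i j : Fin N,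
      (if i ≠ j then coth (x i - x j) • (E N i j ⊗ₖ E N j i) else 0) (a, b) (d, e)
      = if i = a then (if j = b then
          (if a ≠ b ∧ d = b ∧ e = a then coth (x a - x b) else 0) else 0) else 0 := by
    intro i j
    rw [apply_ite (fun M : Matrix (Fin N × Fin N) (Fin N × Fin N) ℂ => M (a, b) (d, e))]
    simp only [Matrix.smul_apply, kron_apply, Matrix.zero_apply, smul_eq_mul, mul_ite,
      mul_one, mul_zero]
    split_ifs <;> simp_all
  simp only [rCM, Matrix.sub_apply, Matrix.smul_apply, Matrix.sum_apply, flipP_apply,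
    hterm, smul_eq_mul, Finset.sum_ite_eq', Finset.mem_univ, if_true, cf]
  by_cases h1 : d = b ∧ e = a <;> by_cases h2 : a ≠ b <;> simp_all <;> split_ifs <;> simp_all

lemma pderiv_rCM_apply (l m : ℂ) (x : Fin N → ℂ)
    (hx : ∀ i j : Fin N, i ≠ j → Complex.sinh (x i - x j) ≠ 0)
    (ν a b d e : Fin N) :
    pderivMat N ν (rCM N l m) x (a, b) (d, e) =
      if d = b ∧ e = a then dc N x ν a b else 0 := by
  simp only [pderivMat, rCM_apply]
  by_cases h1 : d = b ∧ e = a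
  swap
  · simp [h1]
  simp only [h1, and_self, if_true, cf]
  by_cases hab : a ≠ b
  swap
  · simp [dc, hab]
  have hfun : (fun t => coth (l - m) -
      if a ≠ b then coth (Function.update x ν t a - Function.update x ν t b) else 0) =
      fun t => coth (l - m) - coth (Function.update x ν t a - Function.update x ν t b) := by
    funext t; rw [if_pos hab]
  rw [hfun]
  simp only [dc, if_pos hab]
  by_cases ha : ν = a
  · subst ha
    have hb : b ≠ ν := hab.symm
    have key : (fun t => coth (l - m) -
        coth (Function.update x ν t ν - Function.update x ν t b)) =
        fun t : ℂ => coth (l - m) - coth (t - x b) := by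
      funext t; rw [Function.update_self, Function.update_of_ne hb]
    rw [key]
    have h2 : HasDerivAt (fun t : ℂ => t - x b) 1 (x ν) := (hasDerivAt_id _).sub_const _
    have h3 := (coth_hasDerivAt (hx ν b hab)).comp (x ν) h2
    have h4 := (hasDerivAt_const (x ν) (coth (l - m))).sub h3
    have h5 : HasDerivAt (fun t : ℂ => coth (l - m) - coth (t - x b))
        (0 - (1 - coth (x ν - x b) ^ 2) * 1) (x ν) := by
      simpa [Function.comp, Pi.sub_def] using h4
    rw [h5.deriv]
    simp [hb.symm]
  · by_cases hbν : ν = b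
    · subst hbν
      have haν : a ≠ ν := fun h => ha h.symm
      have key : (fun t => coth (l - m) -
          coth (Function.update x ν t a - Function.update x ν t ν)) =
          fun t : ℂ => coth (l - m) - coth (x a - t) := by
        funext t; rw [Function.update_self, Function.update_of_ne haν]
      rw [key]
      have h2 : HasDerivAt (fun t : ℂ => x a - t) (-1) (x ν) := (hasDerivAt_id _).const_sub _
      have h3 := (coth_hasDerivAt (hx a ν hab)).comp (x ν) h2
      have h4 := (hasDerivAt_const (x ν) (coth (l - m))).sub h3
      have h5 : HasDerivAt (fun t : ℂ => coth (l - m) - coth (x a - t))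
          (0 - (1 - coth (x a - x ν) ^ 2) * -1) (x ν) := by
        simpa [Function.comp, Pi.sub_def] using h4
      rw [h5.deriv]
      simp [ha, haν.symm]
    · have haν : a ≠ ν := fun h => ha h.symm
      have hbν' : b ≠ ν := fun h => hbν h.symm
      have key : (fun t => coth (l - m) -
          coth (Function.update x ν t a - Function.update x ν t b)) =
          fun _ : ℂ => coth (l - m) - coth (x a - x b) := by
        funext t; rw [Function.update_of_ne haν, Function.update_of_ne hbν']
      rw [key, deriv_const]
      simp [ha, hbν]

abbrev Idx := Fin N × Fin N × Fin N

lemma sum_delta_mul {ι : Type*} [Fintype ι] [DecidableEq ι] (v : ι) (cA : ℂ) (f : ι → ℂ) :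
    ∑ j : ι, (if j = v then cA else 0) * f j = cA * f v := by
  simp [ite_mul, Finset.sum_ite_eq', Finset.mem_univ]

section rows
variable {N}
variable (R : Matrix (Fin N × Fin N) (Fin N × Fin N) ℂ) (g : Fin N → Fin N → ℂ)
variable (hR : ∀ a b d e : Fin N, R (a, b) (d, e) = if d = b ∧ e = a then g a b else 0)

include hR in
lemma pl12_row (a b c : Fin N) (j : Idx N) :
    pl12 N R (a, b, c) j = if j = (b, a, c) then g a b else 0 := by
  obtain ⟨j1, j2, j3⟩ := j
  simp only [pl12, hR, Prod.mk.injEq]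
  split_ifs <;> simp_all

include hR in
lemma pl13_row (a b c : Fin N) (j : Idx N) :
    pl13 N R (a, b, c) j = if j = (c, b, a) then g a c else 0 := by
  obtain ⟨j1, j2, j3⟩ := j
  simp only [pl13, hR, Prod.mk.injEq]
  split_ifs <;> simp_all

include hR in
lemma pl23_row (a b c : Fin N) (j : Idx N) :
    pl23 N R (a, b, c) j = if j = (a, c, b) then g b c else 0 := by
  obtain ⟨j1, j2, j3⟩ := j
  simp only [pl23, hR, Prod.mk.injEq]
  split_ifs <;> simp_all

lemma pl1E_row (ν : Fin N) (p j : Idx N) :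
    pl1 N (E N ν ν) p j = if j = p then (if ν = p.1 then 1 else 0) else 0 := by
  obtain ⟨p1, p2, p3⟩ := p; obtain ⟨j1, j2, j3⟩ := j
  simp only [pl1, E, Matrix.single, Matrix.of_apply, Prod.mk.injEq]
  split_ifs <;> simp_all <;> aesop

lemma pl2E_row (ν : Fin N) (p j : Idx N) :
    pl2 N (E N ν ν) p j = if j = p then (if ν = p.2.1 then 1 else 0) else 0 := by
  obtain ⟨p1, p2, p3⟩ := p; obtain ⟨j1, j2, j3⟩ := j
  simp only [pl2, E, Matrix.single, Matrix.of_apply, Prod.mk.injEq]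
  split_ifs <;> simp_all <;> aesop

lemma pl3E_row (ν : Fin N) (p j : Idx N) :
    pl3 N (E N ν ν) p j = if j = p then (if ν = p.2.2 then 1 else 0) else 0 := by
  obtain ⟨p1, p2, p3⟩ := p; obtain ⟨j1, j2, j3⟩ := j
  simp only [pl3, E, Matrix.single, Matrix.of_apply, Prod.mk.injEq]
  split_ifs <;> simp_all <;> aesop
end rows

section prods
variable {N}
variable (R S : Matrix (Fin N × Fin N) (Fin N × Fin N) ℂ) (g h : Fin N → Fin N → ℂ)
variable (hR : ∀ a b d e : Fin N, R (a, b) (d, e) = if d = b ∧ e = a then g a b else 0)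
variable (hS : ∀ a b d e : Fin N, S (a, b) (d, e) = if d = b ∧ e = a then h a b else 0)

include hR hS in
lemma mul_12_13 (a b c : Fin N) (q : Idx N) :
    (pl12 N R * pl13 N S) (a, b, c) q = if q = (c, a, b) then g a b * h b c else 0 := by
  rw [Matrix.mul_apply]
  rw [Finset.sum_congr rfl (fun j _ => by rw [pl12_row R g hR a b c j])]
  rw [sum_delta_mul, pl13_row S h hS, mul_ite, mul_zero]

include hR hS in
lemma mul_13_12 (a b c : Fin N) (q : Idx N) :
    (pl13 N R * pl12 N S) (a, b, c) q = if q = (b, c, a) then g a c * h c b else 0 := by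
  rw [Matrix.mul_apply]
  rw [Finset.sum_congr rfl (fun j _ => by rw [pl13_row R g hR a b c j])]
  rw [sum_delta_mul, pl12_row S h hS, mul_ite, mul_zero]

include hR hS in
lemma mul_12_23 (a b c : Fin N) (q : Idx N) :
    (pl12 N R * pl23 N S) (a, b, c) q = if q = (b, c, a) then g a b * h a c else 0 := by
  rw [Matrix.mul_apply]
  rw [Finset.sum_congr rfl (fun j _ => by rw [pl12_row R g hR a b c j])]
  rw [sum_delta_mul, pl23_row S h hS, mul_ite, mul_zero]

include hR hS in
lemma mul_23_12 (a b c : Fin N) (q : Idx N) :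
    (pl23 N R * pl12 N S) (a, b, c) q = if q = (c, a, b) then g b c * h a c else 0 := by
  rw [Matrix.mul_apply]
  rw [Finset.sum_congr rfl (fun j _ => by rw [pl23_row R g hR a b c j])]
  rw [sum_delta_mul, pl12_row S h hS, mul_ite, mul_zero]

include hR hS in
lemma mul_13_23 (a b c : Fin N) (q : Idx N) :
    (pl13 N R * pl23 N S) (a, b, c) q = if q = (c, a, b) then g a c * h b a else 0 := by
  rw [Matrix.mul_apply]
  rw [Finset.sum_congr rfl (fun j _ => by rw [pl13_row R g hR a b c j])]
  rw [sum_delta_mul, pl23_row S h hS, mul_ite, mul_zero]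

include hR hS in
lemma mul_23_13 (a b c : Fin N) (q : Idx N) :
    (pl23 N R * pl13 N S) (a, b, c) q = if q = (b, c, a) then g b c * h a b else 0 := by
  rw [Matrix.mul_apply]
  rw [Finset.sum_congr rfl (fun j _ => by rw [pl23_row R g hR a b c j])]
  rw [sum_delta_mul, pl13_row S h hS, mul_ite, mul_zero]
end prods

lemma sum_pl1_mul {N : ℕ} (X : Fin N → Matrix (Idx N) (Idx N) ℂ) (p q : Idx N) :
    (∑ ν : Fin N, pl1 N (E N ν ν) * X ν) p q = X p.1 p q := by
  rw [Matrix.sum_apply]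
  have key : ∀ ν : Fin N, (pl1 N (E N ν ν) * X ν) p q = if ν = p.1 then X ν p q else 0 := by
    intro ν
    rw [Matrix.mul_apply]
    rw [Finset.sum_congr rfl (fun j _ => by rw [pl1E_row ν p j])]
    by_cases hν : ν = p.1
    · simp only [hν, eq_self_iff_true, if_true]
      rw [show (∑ j, (if j = p then (1:ℂ) else 0) * X p.1 j q) = 1 * X p.1 p q from
        sum_delta_mul p 1 (fun j => X p.1 j q), one_mul]
    · simp only [hν, if_false]
      simp
  rw [Finset.sum_congr rfl (fun ν _ => key ν)]
  simp [Finset.sum_ite_eq', Finset.mem_univ]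

lemma sum_pl2_mul {N : ℕ} (X : Fin N → Matrix (Idx N) (Idx N) ℂ) (p q : Idx N) :
    (∑ ν : Fin N, pl2 N (E N ν ν) * X ν) p q = X p.2.1 p q := by
  rw [Matrix.sum_apply]
  have key : ∀ ν : Fin N, (pl2 N (E N ν ν) * X ν) p q = if ν = p.2.1 then X ν p q else 0 := by
    intro ν
    rw [Matrix.mul_apply]
    rw [Finset.sum_congr rfl (fun j _ => by rw [pl2E_row ν p j])]
    by_cases hν : ν = p.2.1
    · simp only [hν, eq_self_iff_true, if_true]
      rw [show (∑ j, (if j = p then (1:ℂ) else 0) * X p.2.1 j q) = 1 * X p.2.1 p q from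
        sum_delta_mul p 1 (fun j => X p.2.1 j q), one_mul]
    · simp only [hν, if_false]
      simp
  rw [Finset.sum_congr rfl (fun ν _ => key ν)]
  simp [Finset.sum_ite_eq', Finset.mem_univ]

lemma sum_pl3_mul {N : ℕ} (X : Fin N → Matrix (Idx N) (Idx N) ℂ) (p q : Idx N) :
    (∑ ν : Fin N, pl3 N (E N ν ν) * X ν) p q = X p.2.2 p q := by
  rw [Matrix.sum_apply]
  have key : ∀ ν : Fin N, (pl3 N (E N ν ν) * X ν) p q = if ν = p.2.2 then X ν p q else 0 := by
    intro ν
    rw [Matrix.mul_apply]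
    rw [Finset.sum_congr rfl (fun j _ => by rw [pl3E_row ν p j])]
    by_cases hν : ν = p.2.2
    · simp only [hν, eq_self_iff_true, if_true]
      rw [show (∑ j, (if j = p then (1:ℂ) else 0) * X p.2.2 j q) = 1 * X p.2.2 p q from
        sum_delta_mul p 1 (fun j => X p.2.2 j q), one_mul]
    · simp only [hν, if_false]
      simp
  rw [Finset.sum_congr rfl (fun ν _ => key ν)]
  simp [Finset.sum_ite_eq', Finset.mem_univ]

theorem rCM_generalized_CYBE (hN : 2 ≤ N) (lam₁ lam₂ lam₃ : ℂ) (x : Fin N → ℂ)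
    (h12 : ¬ inPiZ (lam₁ - lam₂)) (h13 : ¬ inPiZ (lam₁ - lam₃))
    (h23 : ¬ inPiZ (lam₂ - lam₃))
    (hx : ∀ i j : Fin N, i ≠ j → ¬ inPiZ (x i - x j)) :
    mcomm (pl12 N (rCM N lam₁ lam₂ x)) (pl13 N (rCM N lam₁ lam₃ x)) +
    mcomm (pl12 N (rCM N lam₁ lam₂ x)) (pl23 N (rCM N lam₂ lam₃ x)) +
    mcomm (pl13 N (rCM N lam₁ lam₃ x)) (pl23 N (rCM N lam₂ lam₃ x)) -
    (∑ ν : Fin N, pl1 N (E N ν ν) * pl23 N (pderivMat N ν (rCM N lam₂ lam₃) x)) +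
    (∑ ν : Fin N, pl2 N (E N ν ν) * pl13 N (pderivMat N ν (rCM N lam₁ lam₃) x)) -
    (∑ ν : Fin N, pl3 N (E N ν ν) * pl12 N (pderivMat N ν (rCM N lam₁ lam₂) x)) = 0 := by
  have hxs : ∀ i j : Fin N, i ≠ j → Complex.sinh (x i - x j) ≠ 0 :=
    fun i j hij => sinh_ne_zero_of_not_inPiZ (hx i j hij)
  have hs12 := sinh_ne_zero_of_not_inPiZ h12
  have hs23 := sinh_ne_zero_of_not_inPiZ h23
  have hs13 := sinh_ne_zero_of_not_inPiZ h13
  have hlam : coth (lam₁ - lam₂) * coth (lam₂ - lam₃) + 1 =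
      coth (lam₁ - lam₃) * (coth (lam₁ - lam₂) + coth (lam₂ - lam₃)) := by
    have h := coth_addition hs12 hs23
      (by rw [show (lam₁ - lam₂) + (lam₂ - lam₃) = lam₁ - lam₃ by ring]; exact hs13)
    rwa [show (lam₁ - lam₂) + (lam₂ - lam₃) = lam₁ - lam₃ by ring] at h
  ext ⟨a, b, c⟩ q
  simp only [mcomm, Matrix.sub_apply, Matrix.add_apply, Matrix.zero_apply]
  rw [mul_12_13 _ _ _ _ (rCM_apply N lam₁ lam₂ x) (rCM_apply N lam₁ lam₃ x) a b c q,
      mul_13_12 _ _ _ _ (rCM_apply N lam₁ lam₃ x) (rCM_apply N lam₁ lam₂ x) a b c q,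
      mul_12_23 _ _ _ _ (rCM_apply N lam₁ lam₂ x) (rCM_apply N lam₂ lam₃ x) a b c q,
      mul_23_12 _ _ _ _ (rCM_apply N lam₂ lam₃ x) (rCM_apply N lam₁ lam₂ x) a b c q,
      mul_13_23 _ _ _ _ (rCM_apply N lam₁ lam₃ x) (rCM_apply N lam₂ lam₃ x) a b c q,
      mul_23_13 _ _ _ _ (rCM_apply N lam₂ lam₃ x) (rCM_apply N lam₁ lam₃ x) a b c q]
  rw [sum_pl1_mul (fun ν => pl23 N (pderivMat N ν (rCM N lam₂ lam₃) x)) (a, b, c) q,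
      sum_pl2_mul (fun ν => pl13 N (pderivMat N ν (rCM N lam₁ lam₃) x)) (a, b, c) q,
      sum_pl3_mul (fun ν => pl12 N (pderivMat N ν (rCM N lam₁ lam₂) x)) (a, b, c) q]
  rw [pl23_row _ (dc N x a) (pderiv_rCM_apply N lam₂ lam₃ x hxs a) a b c q,
      pl13_row _ (dc N x b) (pderiv_rCM_apply N lam₁ lam₃ x hxs b) a b c q,
      pl12_row _ (dc N x c) (pderiv_rCM_apply N lam₁ lam₂ x hxs c) a b c q]
  by_cases hab : a = b <;> by_cases hac : a = c <;> by_cases hbc : b = c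
  · -- a = b = c
    subst hab; subst hac
    by_cases hq : q = (a, a, a) <;> simp [hq, cf, dc] <;> ring
  · simp_all
  · simp_all
  · -- a = b ≠ c
    subst hab
    have hca : coth (x c - x a) = -coth (x a - x c) := by
      rw [show x c - x a = -(x a - x c) by ring, coth_neg]
    by_cases h1 : q = (c, a, a)
    · subst h1
      simp [cf, dc, hac, Ne.symm hac, Prod.mk.injEq, hca]
      linear_combination -hlam
    · by_cases h2 : q = (a, c, a)
      · subst h2
        simp [cf, dc, hac, Ne.symm hac, Prod.mk.injEq, hca]
        linear_combination hlam
      · simp [h1, h2, dc, hac, Ne.symm hac, Prod.mk.injEq]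
  · simp_all
  · -- a = c ≠ b
    subst hac
    have hba : coth (x b - x a) = -coth (x a - x b) := by
      rw [show x b - x a = -(x a - x b) by ring, coth_neg]
    by_cases h1 : q = (a, a, b)
    · subst h1
      simp [cf, dc, hab, Ne.symm hab, Prod.mk.injEq, hba]
      linear_combination -hlam
    · by_cases h2 : q = (b, a, a)
      · subst h2
        simp [cf, dc, hab, Ne.symm hab, Prod.mk.injEq, hba]
        linear_combination hlam
      · simp [h1, h2, dc, hab, Ne.symm hab, Prod.mk.injEq]
  · -- b = c ≠ a
    subst hbc
    have hba : coth (x b - x a) = -coth (x a - x b) := by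
      rw [show x b - x a = -(x a - x b) by ring, coth_neg]
    by_cases h1 : q = (b, a, b)
    · subst h1
      simp [cf, dc, hab, Ne.symm hab, Prod.mk.injEq, hba]
      linear_combination -hlam
    · by_cases h2 : q = (b, b, a)
      · subst h2
        simp [cf, dc, hab, Ne.symm hab, Prod.mk.injEq, hba]
        linear_combination hlam
      · simp [h1, h2, dc, hab, Ne.symm hab, Prod.mk.injEq]
  · -- all distinct
    have hxid : coth (x a - x b) * coth (x b - x c) + 1 =
        coth (x a - x c) * (coth (x a - x b) + coth (x b - x c)) := by
      have h := coth_addition (hxs a b hab) (hxs b c hbc)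
        (by rw [show (x a - x b) + (x b - x c) = x a - x c by ring]; exact hxs a c hac)
      rwa [show (x a - x b) + (x b - x c) = x a - x c by ring] at h
    have hba : coth (x b - x a) = -coth (x a - x b) := by
      rw [show x b - x a = -(x a - x b) by ring, coth_neg]
    have hcb : coth (x c - x b) = -coth (x b - x c) := by
      rw [show x c - x b = -(x b - x c) by ring, coth_neg]
    have hca : coth (x c - x a) = -coth (x a - x c) := by
      rw [show x c - x a = -(x a - x c) by ring, coth_neg]
    by_cases h1 : q = (c, a, b)
    · subst h1
      simp [cf, dc, hab, hac, hbc, Ne.symm hab, Ne.symm hac, Ne.symm hbc,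
        Prod.mk.injEq, hba, hcb, hca]
      linear_combination -hlam + hxid
    · by_cases h2 : q = (b, c, a)
      · subst h2
        simp [cf, dc, hab, hac, hbc, Ne.symm hab, Ne.symm hac, Ne.symm hbc,
          Prod.mk.injEq, hba, hcb, hca]
        linear_combination hlam - hxid
      · simp [h1, h2, dc, hab, hac, hbc, Ne.symm hab, Ne.symm hac, Ne.symm hbc,
          Prod.mk.injEq]
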